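/- Let ⪰ be a binary relation on a set C of Savage acts satisfying extended statewise cancellation. Embed each act a ∈ C as the vector x_a ∈ ℝ^{S×O} with x_a(s,o) = 1 if a(s) = o and x_a(s,o) = 0 otherwise. Let D = {x_a − x_b : a, b ∈ C}, let D⁺ = {x_a − x_b : a, b ∈ C and a ⪰ b}, and let CC be the set of all finite nonnegative linear combinations of elements of D⁺. Then CC is a closed convex cone and D⁺ = CC ∩ D. -/

import Mathlib

/-- Extended statewise cancellation for a relation on a set of Savage acts. -/
def ExtStatewiseCancel {S O : Type*} (C : Set (S → O)) (R : (S → O) → (S → O) → Prop) : Prop :=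
  ∀ (n : ℕ) (a b : Fin (n + 1) → S → O),
    (∀ i, a i ∈ C) → (∀ i, b i ∈ C) →
    (∀ s : S, ((List.ofFn fun i => a i s : List O) : Multiset O)
            = ((List.ofFn fun i => b i s : List O) : Multiset O)) →
    (∃ k, k ≤ n ∧ (∀ i : Fin (n + 1), (i : ℕ) < k → R (a i) (b i)) ∧
      (∀ i : Fin (n + 1), k ≤ (i : ℕ) → a i = a (Fin.last n) ∧ b i = b (Fin.last n))) →
    R (b (Fin.last n)) (a (Fin.last n))

/-- The embedding of a Savage act into `ℝ^{S×O}` as a 0/1 vector. -/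
def embedAct {S O : Type*} [DecidableEq O] (a : S → O) : S → O → ℝ :=
  fun s o => if a s = o then 1 else 0

/-- `D = {x_a - x_b : a, b ∈ C}`. -/
def DsetE {S O : Type*} [DecidableEq O] (C : Set (S → O)) : Set (S → O → ℝ) :=
  {x | ∃ a ∈ C, ∃ b ∈ C, x = embedAct a - embedAct b}

/-- `D⁺ = {x_a - x_b : a, b ∈ C and a ⪰ b}`. -/
def DplusE {S O : Type*} [DecidableEq O] (C : Set (S → O))
    (R : (S → O) → (S → O) → Prop) : Set (S → O → ℝ) :=
  {x | ∃ a ∈ C, ∃ b ∈ C, R a b ∧ x = embedAct a - embedAct b}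

/-- `CC`: all finite nonnegative linear combinations of elements of `D⁺`. -/
def coneOfE {S O : Type*} [DecidableEq O] (C : Set (S → O))
    (R : (S → O) → (S → O) → Prop) : Set (S → O → ℝ) :=
  {x | ∃ (m : ℕ) (d : Fin (m + 1) → S → O → ℝ) (α : Fin (m + 1) → ℝ),
    (∀ i, d i ∈ DplusE C R) ∧ (∀ i, 0 ≤ α i) ∧ x = ∑ i, α i • d i}

section ConeGen

variable {V : Type*} [NormedAddCommGroup V] [NormedSpace ℝ V] [FiniteDimensional ℝ V]

/-- The cone generated by a finite set of vectors. -/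
def coneGen (G : Finset V) : Set V :=
  {x | ∃ c : V → ℝ, (∀ v, 0 ≤ c v) ∧ x = ∑ v ∈ G, c v • v}

omit [FiniteDimensional ℝ V] in
theorem coneGen_mono {t G : Finset V} (h : t ⊆ G) : coneGen t ⊆ coneGen G := by
  classical
  rintro x ⟨c, hc, rfl⟩
  refine ⟨fun v => if v ∈ t then c v else 0, fun v => by by_cases h' : v ∈ t <;> simp [h', hc v], ?_⟩
  calc ∑ v ∈ t, c v • v = ∑ v ∈ t, (if v ∈ t then c v else 0) • v :=
        Finset.sum_congr rfl fun v hv => by simp [hv]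
    _ = ∑ v ∈ G, (if v ∈ t then c v else 0) • v :=
        Finset.sum_subset h (fun v _ hvt => by simp [hvt])

omit [FiniteDimensional ℝ V] in
theorem coneGen_caratheodory_aux : ∀ (n : ℕ) (G : Finset V), G.card = n → ∀ x ∈ coneGen G,
    ∃ t ⊆ G, LinearIndependent ℝ (fun v : t => (v : V)) ∧ x ∈ coneGen t := by
  classical
  intro n
  induction n using Nat.strong_induction_on with
  | _ n ih =>
  intro G hn x hx
  by_cases hind : LinearIndependent ℝ (fun v : G => (v : V))
  · exact ⟨G, le_refl _, hind, hx⟩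
  · obtain ⟨c, hc, hsum⟩ := hx
    obtain ⟨g, hg0, i, hgi⟩ := Fintype.not_linearIndependent_iff.mp hind
    set g' : V → ℝ := fun v => if h : v ∈ G then g ⟨v, h⟩ else 0 with hg'
    have hg'sum : ∑ v ∈ G, g' v • v = 0 := by
      rw [← hg0, ← Finset.sum_attach G (fun v => g' v • v)]
      exact Finset.sum_congr rfl fun v _ => by simp [hg', v.2]
    have key : ∀ (g' : V → ℝ), (∑ v ∈ G, g' v • v = 0) → (∃ v ∈ G, 0 < g' v) →
        ∃ t ⊆ G, LinearIndependent ℝ (fun v : t => (v : V)) ∧ x ∈ coneGen t := by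
      rintro g' hgsum ⟨v₁, hv₁G, hv₁⟩
      have hne : (G.filter (fun v => 0 < g' v)).Nonempty := ⟨v₁, Finset.mem_filter.mpr ⟨hv₁G, hv₁⟩⟩
      obtain ⟨v₀, hv₀mem, hv₀min⟩ := Finset.exists_min_image _ (fun v => c v / g' v) hne
      rw [Finset.mem_filter] at hv₀mem
      obtain ⟨hv₀G, hv₀pos⟩ := hv₀mem
      set τ := c v₀ / g' v₀ with hτ
      have hτ0 : 0 ≤ τ := div_nonneg (hc v₀) hv₀pos.le
      set c' : V → ℝ := fun v => c v - τ * g' v with hc'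
      have hc'0 : ∀ v ∈ G, 0 ≤ c' v := by
        intro v hv
        by_cases hgv : 0 < g' v
        · have h1 := hv₀min v (Finset.mem_filter.mpr ⟨hv, hgv⟩)
          have h2 : τ * g' v ≤ (c v / g' v) * g' v :=
            mul_le_mul_of_nonneg_right h1 hgv.le
          rw [div_mul_cancel₀ _ hgv.ne'] at h2
          simp only [hc']
          linarith
        · push_neg at hgv
          simp only [hc']
          nlinarith [hc v]
      have hc'v₀ : c' v₀ = 0 := by
        simp only [hc', hτ]
        field_simp
        ring
      have hxsum : x = ∑ v ∈ G, c' v • v := by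
        simp only [hc', sub_smul, mul_smul, Finset.sum_sub_distrib, ← Finset.smul_sum, hgsum,
          smul_zero, sub_zero, hsum]
      have hx' : x ∈ coneGen (G.erase v₀) := by
        refine ⟨fun v => if v ∈ G.erase v₀ then c' v else 0, fun v => ?_, ?_⟩
        · dsimp only; split
          · exact hc'0 _ (Finset.mem_of_mem_erase ‹_›)
          · exact le_refl 0
        · calc x = ∑ v ∈ G, c' v • v := hxsum
            _ = ∑ v ∈ G.erase v₀, c' v • v := by
                rw [← Finset.add_sum_erase _ _ hv₀G, hc'v₀, zero_smul, zero_add]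
            _ = _ := Finset.sum_congr rfl fun v hv => by simp [hv]
      obtain ⟨t, ht, hind', hmem⟩ := ih (G.erase v₀).card
        (by have := Finset.card_pos.mpr ⟨v₀, hv₀G⟩
            rw [Finset.card_erase_of_mem hv₀G]; omega) _ rfl x hx'
      exact ⟨t, ht.trans (Finset.erase_subset _ _), hind', hmem⟩
    by_cases hpos : ∃ v ∈ G, 0 < g' v
    · exact key g' hg'sum hpos
    · apply key (fun v => -g' v)
      · simpa [neg_smul] using congrArg Neg.neg hg'sum
      · refine ⟨i, i.2, ?_⟩
        push_neg at hpos
        have h1 : g' i ≤ 0 := hpos i i.2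
        have h2 : g' (i : V) = g i := by simp [hg', i.2]
        have h3 : g' (i : V) ≠ 0 := by rw [h2]; exact hgi
        simp only [neg_pos]
        exact lt_of_le_of_ne h1 h3

omit [FiniteDimensional ℝ V] in
theorem coneGen_caratheodory (G : Finset V) (x : V) (hx : x ∈ coneGen G) :
    ∃ t ⊆ G, LinearIndependent ℝ (fun v : t => (v : V)) ∧ x ∈ coneGen t :=
  coneGen_caratheodory_aux G.card G rfl x hx

theorem coneGen_isClosed_of_linearIndependent (t : Finset V)
    (hind : LinearIndependent ℝ (fun v : t => (v : V))) : IsClosed (coneGen t) := by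
  classical
  set f : ({v // v ∈ t} → ℝ) →ₗ[ℝ] V :=
    { toFun := fun c => ∑ v : {v // v ∈ t}, c v • (v : V)
      map_add' := fun c d => by simp [add_smul, Finset.sum_add_distrib]
      map_smul' := fun r c => by simp [Finset.smul_sum, smul_smul] } with hf
  have hker : LinearMap.ker f = ⊥ := by
    rw [LinearMap.ker_eq_bot']
    intro c hc
    exact funext fun v => linearIndependent_iff'.mp hind Finset.univ c (by simpa [hf] using hc) v
      (Finset.mem_univ v)
  have hemb := LinearMap.isClosedEmbedding_of_injective (f := f) hker
  have himage : coneGen t = f '' {c | ∀ v, 0 ≤ c v} := by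
    ext x
    constructor
    · rintro ⟨c, hc, rfl⟩
      refine ⟨fun v => c v, fun v => hc _, ?_⟩
      simp only [hf, LinearMap.coe_mk, AddHom.coe_mk]
      rw [← Finset.sum_attach t (fun v => c v • v)]
      rfl
    · rintro ⟨c, hc, rfl⟩
      refine ⟨fun v => if h : v ∈ t then c ⟨v, h⟩ else 0, fun v => ?_, ?_⟩
      · dsimp only; split
        · exact hc _
        · exact le_refl 0
      · simp only [hf, LinearMap.coe_mk, AddHom.coe_mk]
        rw [← Finset.sum_attach t (fun v => (if h : v ∈ t then c ⟨v, h⟩ else 0) • v)]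
        exact (Finset.sum_congr rfl fun v _ => by simp [v.2]).symm
  rw [himage]
  apply hemb.isClosedMap
  have : {c : {v // v ∈ t} → ℝ | ∀ v, 0 ≤ c v} = ⋂ v, {c | 0 ≤ c v} := by
    ext c; simp [Set.mem_iInter]
  rw [this]
  exact isClosed_iInter fun v => isClosed_le continuous_const (continuous_apply v)

theorem coneGen_isClosed (G : Finset V) : IsClosed (coneGen G) := by
  classical
  have : coneGen G = ⋃ t ∈ {t : Finset V | t ⊆ G ∧ LinearIndependent ℝ (fun v : t => (v : V))},
      coneGen t := by
    ext x
    simp only [Set.mem_iUnion, Set.mem_setOf_eq]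
    constructor
    · intro hx
      obtain ⟨t, ht, hind, hmem⟩ := coneGen_caratheodory G x hx
      exact ⟨t, ⟨ht, hind⟩, hmem⟩
    · rintro ⟨t, ⟨ht, _⟩, hmem⟩
      exact coneGen_mono ht hmem
  rw [this]
  apply Set.Finite.isClosed_biUnion
  · exact Set.Finite.subset (G.powerset : Finset (Finset V)).finite_toSet
      (fun t ht => Finset.mem_coe.mpr (Finset.mem_powerset.mpr ht.1))
  · rintro t ⟨_, hind⟩
    exact coneGen_isClosed_of_linearIndependent t hind

end ConeGen

section RatCoeff

variable {S O : Type*} [Fintype S] [Fintype O]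

/-- Dot product on `S → O → ℝ`. -/
def dotSO (u w : S → O → ℝ) : ℝ := ∑ s, ∑ o, u s o * w s o

theorem rat_coeff_of_linearIndependent
    (t : Finset (S → O → ℝ)) (hind : LinearIndependent ℝ (fun v : t => (v : S → O → ℝ)))
    (hrat : ∀ v ∈ t, ∀ s o, ∃ q : ℚ, v s o = (q : ℝ))
    (x : S → O → ℝ) (hx : ∀ s o, ∃ q : ℚ, x s o = (q : ℝ))
    (c : (S → O → ℝ) → ℝ) (hsum : x = ∑ v ∈ t, c v • v) :
    ∀ v ∈ t, ∃ q : ℚ, c v = (q : ℝ) := by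
  classical
  set ι := {v // v ∈ t}
  have hvq' : ∀ i : ι, ∃ vq : S → O → ℚ, ∀ s o, (i : S → O → ℝ) s o = ((vq s o : ℚ) : ℝ) :=
    fun i => ⟨fun s o => (hrat i i.2 s o).choose, fun s o => (hrat i i.2 s o).choose_spec⟩
  choose vq hvq using hvq'
  obtain ⟨xq, hxq⟩ : ∃ xq : S → O → ℚ, ∀ s o, x s o = ((xq s o : ℚ) : ℝ) :=
    ⟨fun s o => (hx s o).choose, fun s o => (hx s o).choose_spec⟩
  set GR : Matrix ι ι ℝ := fun i j => dotSO (i : S → O → ℝ) (j : S → O → ℝ) with hGR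
  set Gq : Matrix ι ι ℚ := fun i j => ∑ s, ∑ o, vq i s o * vq j s o with hGq
  have hGmap : ∀ i j, ((Gq i j : ℚ) : ℝ) = GR i j := by
    intro i j
    simp only [hGq, hGR, dotSO]
    push_cast
    exact Finset.sum_congr rfl fun s _ => Finset.sum_congr rfl fun o _ => by
      rw [hvq i s o, hvq j s o]
  set gR : ι → ℝ := fun i => dotSO (i : S → O → ℝ) x with hgR
  set gq : ι → ℚ := fun i => ∑ s, ∑ o, vq i s o * xq s o with hgq
  have hgmap : ∀ i, ((gq i : ℚ) : ℝ) = gR i := by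
    intro i
    simp only [hgq, hgR, dotSO]
    push_cast
    exact Finset.sum_congr rfl fun s _ => Finset.sum_congr rfl fun o _ => by
      rw [hvq i s o, hxq s o]
  have hdot_comb : ∀ (y : ι → ℝ) (u : S → O → ℝ),
      dotSO u (∑ j : ι, y j • (j : S → O → ℝ)) = ∑ j : ι, y j * dotSO u (j : S → O → ℝ) := by
    intro y u
    simp only [dotSO, Finset.sum_apply, Pi.smul_apply, smul_eq_mul, Finset.mul_sum]
    conv_rhs => rw [Finset.sum_comm]
    refine Finset.sum_congr rfl fun s _ => ?_
    rw [Finset.sum_comm]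
    exact Finset.sum_congr rfl fun o _ => Finset.sum_congr rfl fun j _ => by ring
  have hsum' : x = ∑ j : ι, c (j : S → O → ℝ) • (j : S → O → ℝ) := by
    rw [hsum, ← Finset.sum_attach t (fun v => c v • v)]
    rfl
  have hdotcomm : ∀ u w : S → O → ℝ, dotSO u w = dotSO w u := by
    intro u w
    simp only [dotSO]
    exact Finset.sum_congr rfl fun s _ => Finset.sum_congr rfl fun o _ => mul_comm _ _
  have hker : ∀ y : ι → ℝ, GR.mulVec y = 0 → y = 0 := by
    intro y hy
    set w := ∑ j : ι, y j • (j : S → O → ℝ) with hw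
    have hw0 : dotSO w w = 0 := by
      rw [hw, hdot_comb]
      have : ∀ j : ι, dotSO w (j : S → O → ℝ) = GR.mulVec y j := by
        intro j
        rw [hdotcomm, hw, hdot_comb]
        simp only [Matrix.mulVec, dotProduct, hGR]
        exact Finset.sum_congr rfl fun i _ => by ring
      simp only [← hw, this, hy, Pi.zero_apply, mul_zero, Finset.sum_const_zero]
    have hwzero : w = 0 := by
      have h1 : ∀ s ∈ Finset.univ (α := S), ∀ o ∈ Finset.univ (α := O), w s o = 0 := by
        have hnn : ∀ s ∈ Finset.univ (α := S), 0 ≤ ∑ o, w s o * w s o :=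
          fun s _ => Finset.sum_nonneg fun o _ => mul_self_nonneg _
        have h2 := (Finset.sum_eq_zero_iff_of_nonneg hnn).mp hw0
        intro s hs o ho
        have h3 := (Finset.sum_eq_zero_iff_of_nonneg
          (fun o _ => mul_self_nonneg (w s o))).mp (h2 s hs)
        exact mul_self_eq_zero.mp (h3 o ho)
      funext s o
      exact h1 s (Finset.mem_univ s) o (Finset.mem_univ o)
    have := linearIndependent_iff'.mp hind Finset.univ y hwzero
    funext j
    exact this j (Finset.mem_univ j)
  have hdetR : GR.det ≠ 0 := by
    intro h
    obtain ⟨y, hy0, hy⟩ := Matrix.exists_mulVec_eq_zero_iff.mpr h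
    exact hy0 (hker y hy)
  have hdetq : Gq.det ≠ 0 := by
    intro h
    apply hdetR
    have hmap : (Rat.castHom ℝ).mapMatrix Gq = GR := by
      ext i j
      exact hGmap i j
    rw [← hmap, ← RingHom.map_det, h, map_zero]
  set cq := Gq⁻¹.mulVec gq with hcq
  have hGqcq : Gq.mulVec cq = gq := by
    rw [hcq, Matrix.mulVec_mulVec, Matrix.mul_nonsing_inv _ (isUnit_iff_ne_zero.mpr hdetq),
      Matrix.one_mulVec]
  have h2 : GR.mulVec (fun i => ((cq i : ℚ) : ℝ)) = gR := by
    funext i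
    have hcast : ((Gq.mulVec cq i : ℚ) : ℝ) = (gq i : ℝ) := by rw [hGqcq]
    rw [← hgmap i, ← hcast]
    simp only [Matrix.mulVec, dotProduct]
    push_cast
    exact Finset.sum_congr rfl fun j _ => by rw [hGmap i j]
  have h1 : GR.mulVec (fun i => c (i : S → O → ℝ)) = gR := by
    funext i
    simp only [Matrix.mulVec, dotProduct, hgR]
    rw [hsum', hdot_comb]
    exact (Finset.sum_congr rfl fun j _ => by rw [hGR, mul_comm]).symm
  have hfinal : (fun i : ι => c (i : S → O → ℝ)) = fun i => ((cq i : ℚ) : ℝ) := by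
    have hsub := hker (fun i => c (i : S → O → ℝ) - ((cq i : ℚ) : ℝ)) ?_
    · funext i
      have := congrFun hsub i
      dsimp at this
      linarith
    · have hdiff : (fun i : ι => c (i : S → O → ℝ) - ((cq i : ℚ) : ℝ))
          = (fun i : ι => c (i : S → O → ℝ)) - (fun i => ((cq i : ℚ) : ℝ)) := rfl
      rw [hdiff, Matrix.mulVec_sub, h1, h2, sub_self]
  intro v hv
  exact ⟨cq ⟨v, hv⟩, congrFun hfinal ⟨v, hv⟩⟩

end RatCoeff

theorem cancel_of_nat_combo {S O : Type*} [DecidableEq O]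
    (C : Set (S → O)) (R : (S → O) → (S → O) → Prop) (hcancel : ExtStatewiseCancel C R)
    (a b : S → O) (ha : a ∈ C) (hb : b ∈ C) (r : ℕ)
    (av bv : Fin r → S → O) (hav : ∀ i, av i ∈ C) (hbv : ∀ i, bv i ∈ C)
    (hR : ∀ i, R (av i) (bv i)) (n : Fin r → ℕ) (N : ℕ) (hN : 0 < N)
    (hcount : ∀ s o, N * (if a s = o then 1 else 0) + ∑ i, n i * (if bv i s = o then 1 else 0)
      = N * (if b s = o then 1 else 0) + ∑ i, n i * (if av i s = o then 1 else 0)) :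
    R a b := by
  classical
  set P₁ : List ((S → O) × (S → O)) :=
    (List.finRange r).flatMap (fun i => List.replicate (n i) (av i, bv i)) with hP₁
  set Ps : List ((S → O) × (S → O)) := P₁ ++ List.replicate N (b, a) with hPs
  have hlen : Ps.length = P₁.length + N := by simp [hPs]
  obtain ⟨m, hm⟩ : ∃ m, Ps.length = m + 1 := ⟨Ps.length - 1, by omega⟩
  have hkm : P₁.length ≤ m := by omega
  set A : Fin (m + 1) → S → O := fun i => (Ps.get (Fin.cast hm.symm i)).1 with hA
  set B : Fin (m + 1) → S → O := fun i => (Ps.get (Fin.cast hm.symm i)).2 with hB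
  have hmem₁ : ∀ p ∈ P₁, ∃ i, p = (av i, bv i) := by
    intro p hp
    obtain ⟨i, _, hpi⟩ := List.mem_flatMap.mp hp
    exact ⟨i, List.eq_of_mem_replicate hpi⟩
  have hmem : ∀ p ∈ Ps, p.1 ∈ C ∧ p.2 ∈ C := by
    intro p hp
    rcases List.mem_append.mp hp with h | h
    · obtain ⟨i, rfl⟩ := hmem₁ p h
      exact ⟨hav i, hbv i⟩
    · rw [List.eq_of_mem_replicate h]
      exact ⟨hb, ha⟩
  have hget_tail : ∀ (j : ℕ) (hj : j < Ps.length), P₁.length ≤ j → Ps[j] = (b, a) := by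
    intro j hj hj'
    show (P₁ ++ List.replicate N (b, a))[j]'(by simpa [hPs] using hj) = (b, a)
    rw [List.getElem_append_right hj']
    exact List.getElem_replicate _
  have htail : Ps[(m : ℕ)]'(by omega) = (b, a) := hget_tail m (by omega) (by omega)
  have hAlast : A (Fin.last m) = b := congrArg Prod.fst htail
  have hBlast : B (Fin.last m) = a := congrArg Prod.snd htail
  have key := hcancel m A B
    (fun i => (hmem _ (List.getElem_mem _)).1)
    (fun i => (hmem _ (List.getElem_mem _)).2)
    ?_ ?_
  · rwa [hAlast, hBlast] at key
  · intro s
    have hofn : ∀ (g : (S → O) × (S → O) → O),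
        (List.ofFn fun i : Fin (m + 1) => g (Ps.get (Fin.cast hm.symm i))) = Ps.map g := by
      intro g
      apply List.ext_get
      · simp [hm]
      · intro j h₁ h₂
        simp only [List.get_eq_getElem, List.getElem_ofFn, List.getElem_map]
        rfl
    have e1 : (List.ofFn fun i : Fin (m + 1) => (Ps.get (Fin.cast hm.symm i)).1 s)
        = Ps.map (fun p => p.1 s) := hofn (fun p => p.1 s)
    have e2 : (List.ofFn fun i : Fin (m + 1) => (Ps.get (Fin.cast hm.symm i)).2 s)
        = Ps.map (fun p => p.2 s) := hofn (fun p => p.2 s)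
    simp only [hA, hB]
    rw [e1, e2]
    have hmap1 : Ps.map (fun p => p.1 s)
        = (List.finRange r).flatMap (fun i => List.replicate (n i) (av i s))
          ++ List.replicate N (b s) := by
      simp [hPs, hP₁, List.map_flatMap]
    have hmap2 : Ps.map (fun p => p.2 s)
        = (List.finRange r).flatMap (fun i => List.replicate (n i) (bv i s))
          ++ List.replicate N (a s) := by
      simp [hPs, hP₁, List.map_flatMap]
    rw [hmap1, hmap2]
    rw [Multiset.ext]
    intro o
    rw [Multiset.coe_count, Multiset.coe_count]
    rw [List.count_append, List.count_append]
    have hcnt : ∀ (f : Fin r → S → O),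
        List.count o ((List.finRange r).flatMap fun i => List.replicate (n i) (f i s))
          = ∑ i, n i * (if f i s = o then 1 else 0) := by
      intro f
      rw [List.count_flatMap, ← Fin.sum_univ_def]
      refine Finset.sum_congr rfl fun i _ => ?_
      simp only [Function.comp, List.count_replicate]
      by_cases h : f i s = o <;> simp [h, beq_iff_eq]
    rw [hcnt, hcnt]
    have hrep : ∀ (z : O), List.count o (List.replicate N z)
        = N * (if z = o then 1 else 0) := by
      intro z
      rw [List.count_replicate]
      by_cases h : z = o <;> simp [h, beq_iff_eq]
    rw [hrep, hrep]
    have := hcount s o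
    omega
  · refine ⟨P₁.length, hkm, ?_, ?_⟩
    · intro i hi
      have hi' : (Fin.cast hm.symm i : ℕ) < P₁.length := hi
      have hel : Ps[(i : ℕ)]'(by omega) = P₁[(i : ℕ)]'hi' := by
        show (P₁ ++ List.replicate N (b, a))[(i : ℕ)]'(by simp [hPs]; omega) = P₁[(i : ℕ)]'hi'
        exact List.getElem_append_left hi'
      obtain ⟨j, hj⟩ := hmem₁ (P₁[(i : ℕ)]'hi') (List.getElem_mem hi')
      rw [hj] at hel
      have hAi : A i = av j := congrArg Prod.fst hel
      have hBi : B i = bv j := congrArg Prod.snd hel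
      rw [hAi, hBi]
      exact hR j
    · intro i hi
      have h1 : Ps[(i : ℕ)]'(by omega) = (b, a) := hget_tail i (by omega) hi
      rw [hAlast, hBlast]
      exact ⟨congrArg Prod.fst h1, congrArg Prod.snd h1⟩

/-- The cone lemma for Savage acts: `CC` is a closed convex cone and `D⁺ = CC ∩ D`. -/
theorem coneOfE_closed_convexCone_and_dplus_eq_inter
    {S O : Type*} [Fintype S] [Fintype O] [Nonempty S] [Nonempty O] [DecidableEq O]
    (C : Set (S → O)) (R : (S → O) → (S → O) → Prop)
    (hcancel : ExtStatewiseCancel C R) :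
    IsClosed (coneOfE C R) ∧
    (∀ x ∈ coneOfE C R, ∀ y ∈ coneOfE C R, ∀ r s : ℝ, 0 ≤ r → 0 ≤ s →
      r • x + s • y ∈ coneOfE C R) ∧
    DplusE C R = coneOfE C R ∩ DsetE C := by
  classical
  have hrefl : ∀ a ∈ C, R a a := fun a ha =>
    hcancel 0 (fun _ => a) (fun _ => a) (fun _ => ha) (fun _ => ha) (fun _ => rfl)
      ⟨0, le_refl 0, fun i h => absurd h (Nat.not_lt_zero _), fun _ _ => ⟨rfl, rfl⟩⟩
  rcases C.eq_empty_or_nonempty with hC | ⟨a₀, ha₀⟩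
  · have hD : DplusE C R = ∅ := by
      ext x
      simp [DplusE, hC]
    have hcone : coneOfE C R = ∅ := by
      ext x
      simp only [Set.mem_empty_iff_false, iff_false]
      rintro ⟨m, d, α, hd, _, _⟩
      have := hd 0
      rw [hD] at this
      exact this
    refine ⟨by rw [hcone]; exact isClosed_empty, ?_, ?_⟩
    · intro x hx
      rw [hcone] at hx
      exact absurd hx (Set.notMem_empty x)
    · rw [hD, hcone, Set.empty_inter]
  · -- C is nonempty
    have h0mem : (0 : S → O → ℝ) ∈ DplusE C R :=
      ⟨a₀, ha₀, a₀, ha₀, hrefl a₀ ha₀, by simp⟩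
    have hfin : (DplusE C R).Finite := by
      apply Set.Finite.subset (Set.finite_range
        (fun p : (S → O) × (S → O) => embedAct p.1 - embedAct p.2))
      rintro x ⟨a, _, b, _, _, rfl⟩
      exact ⟨(a, b), rfl⟩
    set G : Finset (S → O → ℝ) := hfin.toFinset with hG
    have hGD : ∀ v ∈ G, v ∈ DplusE C R := fun v hv => hfin.mem_toFinset.mp hv
    have hGne : G.Nonempty := ⟨0, hfin.mem_toFinset.mpr h0mem⟩
    have hcone_eq : coneOfE C R = coneGen G := by
      ext x
      constructor
      · rintro ⟨m, d, α, hd, hα, rfl⟩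
        refine ⟨fun v => ∑ i ∈ Finset.univ.filter (fun i => d i = v), α i,
          fun v => Finset.sum_nonneg fun i _ => hα i, ?_⟩
        rw [← Finset.sum_fiberwise_of_maps_to (g := d) (t := G)
          (fun i _ => hfin.mem_toFinset.mpr (hd i)) (fun i => α i • d i)]
        refine Finset.sum_congr rfl fun v _ => ?_
        rw [Finset.sum_smul]
        exact Finset.sum_congr rfl fun i hi => by rw [(Finset.mem_filter.mp hi).2]
      · rintro ⟨c, hc, rfl⟩
        obtain ⟨m, hGcard⟩ : ∃ m, G.card = m + 1 :=
          ⟨G.card - 1, by have := Finset.card_pos.mpr hGne; omega⟩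
        set e : {v // v ∈ G} ≃ Fin (m + 1) := G.equivFin.trans (finCongr hGcard) with he
        refine ⟨m, fun i => (e.symm i : S → O → ℝ), fun i => c (e.symm i : S → O → ℝ),
          fun i => hGD _ (e.symm i).2, fun i => hc _, ?_⟩
        rw [← Finset.sum_attach G (fun v => c v • v)]
        exact (Equiv.sum_comp e.symm (fun j => c (j : S → O → ℝ) • (j : S → O → ℝ))).symm
    refine ⟨by rw [hcone_eq]; exact coneGen_isClosed G, ?_, ?_⟩
    · intro x hx y hy r s hr hs
      rw [hcone_eq] at hx hy ⊢
      obtain ⟨c₁, hc₁, rfl⟩ := hx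
      obtain ⟨c₂, hc₂, rfl⟩ := hy
      refine ⟨fun v => r * c₁ v + s * c₂ v,
        fun v => add_nonneg (mul_nonneg hr (hc₁ v)) (mul_nonneg hs (hc₂ v)), ?_⟩
      rw [Finset.smul_sum, Finset.smul_sum, ← Finset.sum_add_distrib]
      exact Finset.sum_congr rfl fun v _ => by rw [add_smul, mul_smul, mul_smul]
    · apply Set.Subset.antisymm
      · rintro x ⟨a, haC, b, hbC, hab, rfl⟩
        exact ⟨⟨0, fun _ => embedAct a - embedAct b, fun _ => 1,
          fun _ => ⟨a, haC, b, hbC, hab, rfl⟩, fun _ => zero_le_one, by simp⟩,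
          ⟨a, haC, b, hbC, rfl⟩⟩
      · rintro x ⟨hxc, a, haC, b, hbC, rfl⟩
        refine ⟨a, haC, b, hbC, ?_, rfl⟩
        -- extract rational nonnegative combination
        rw [hcone_eq] at hxc
        obtain ⟨t, htG, hind, c, hc, hxt⟩ := coneGen_caratheodory G _ hxc
        have htD : ∀ v ∈ t, v ∈ DplusE C R := fun v hv => hGD v (htG hv)
        have hF : ∀ v : {v // v ∈ t}, ∃ p : (S → O) × (S → O), p.1 ∈ C ∧ p.2 ∈ C ∧
            R p.1 p.2 ∧ (v : S → O → ℝ) = embedAct p.1 - embedAct p.2 := by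
          rintro ⟨v, hv⟩
          obtain ⟨av, h1, bv, h2, h3, h4⟩ := htD v hv
          exact ⟨(av, bv), h1, h2, h3, h4⟩
        choose p hp1 hp2 hp3 hp4 using hF
        have hrat : ∀ v ∈ t, ∀ s o, ∃ q : ℚ, v s o = (q : ℝ) := by
          intro v hv s o
          refine ⟨(if (p ⟨v, hv⟩).1 s = o then 1 else 0) -
            (if (p ⟨v, hv⟩).2 s = o then 1 else 0), ?_⟩
          have h : v = embedAct (p ⟨v, hv⟩).1 - embedAct (p ⟨v, hv⟩).2 := hp4 ⟨v, hv⟩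
          have h2 := congrFun (congrFun h s) o
          rw [h2]
          simp only [Pi.sub_apply, embedAct]
          push_cast
          split_ifs <;> norm_num
        have hxrat : ∀ s o, ∃ q : ℚ, (embedAct a - embedAct b) s o = (q : ℝ) := by
          intro s o
          refine ⟨(if a s = o then 1 else 0) - (if b s = o then 1 else 0), ?_⟩
          simp only [Pi.sub_apply, embedAct]
          push_cast
          split_ifs <;> norm_num
        have hqex := rat_coeff_of_linearIndependent t hind hrat _ hxrat c hxt
        set qf : (S → O → ℝ) → ℚ := fun v => if h : v ∈ t then (hqex v h).choose else 0 with hqf'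
        have hqf : ∀ v ∈ t, c v = ((qf v : ℚ) : ℝ) := by
          intro v hv
          simp only [hqf', dif_pos hv]
          exact (hqex v hv).choose_spec
        have hq0 : ∀ v ∈ t, 0 ≤ qf v := by
          intro v hv
          have := hc v
          rw [hqf v hv] at this
          exact_mod_cast this
        set N : ℕ := ∏ v ∈ t, (qf v).den with hN
        have hNpos : 0 < N := Finset.prod_pos fun v _ => (qf v).pos
        set nn : (S → O → ℝ) → ℕ := fun v => (qf v).num.toNat * (N / (qf v).den) with hnn'
        have hnn : ∀ v ∈ t, ((nn v : ℕ) : ℚ) = qf v * N := by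
          intro v hv
          have hdvd : (qf v).den ∣ N := Finset.dvd_prod_of_mem _ hv
          have h1 : (((qf v).num.toNat : ℕ) : ℚ) = ((qf v).num : ℚ) := by
            exact_mod_cast Int.toNat_of_nonneg (Rat.num_nonneg.mpr (hq0 v hv))
          have h2 : ((N / (qf v).den : ℕ) : ℚ) = (N : ℚ) / ((qf v).den : ℚ) :=
            Nat.cast_div hdvd (Nat.cast_ne_zero.mpr (qf v).den_nz)
          calc ((nn v : ℕ) : ℚ) = (((qf v).num.toNat : ℕ) : ℚ) * ((N / (qf v).den : ℕ) : ℚ) := by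
                rw [hnn']; push_cast; ring
            _ = ((qf v).num : ℚ) * ((N : ℚ) / ((qf v).den : ℚ)) := by rw [h1, h2]
            _ = (((qf v).num : ℚ) / ((qf v).den : ℚ)) * N := by ring
            _ = qf v * N := by rw [Rat.num_div_den]
        have hreal : ∀ v ∈ t, ((nn v : ℕ) : ℝ) = (N : ℝ) * c v := by
          intro v hv
          have h := congrArg (fun q : ℚ => (q : ℝ)) (hnn v hv)
          push_cast at h
          rw [hqf v hv]
          rw [h]
          ring
        -- coordinatewise identity over ℝ
        have hcoordR : ∀ s o, (N : ℝ) * ((if a s = o then (1:ℝ) else 0) - (if b s = o then (1:ℝ) else 0))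
            = ∑ j : {v // v ∈ t}, ((nn (j : S → O → ℝ) : ℕ) : ℝ) *
              ((if (p j).1 s = o then (1:ℝ) else 0) - (if (p j).2 s = o then (1:ℝ) else 0)) := by
          intro s o
          have hxso : (embedAct a - embedAct b) s o
              = (if a s = o then (1:ℝ) else 0) - (if b s = o then (1:ℝ) else 0) := by
            simp [embedAct]
          have hsum1 : (embedAct a - embedAct b) s o = ∑ v ∈ t, c v * v s o := by
            rw [hxt]
            simp [Finset.sum_apply]
          have hsum2 : ∑ v ∈ t, (N : ℝ) * (c v * v s o)
              = ∑ j : {v // v ∈ t}, ((nn (j : S → O → ℝ) : ℕ) : ℝ) *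
              ((if (p j).1 s = o then (1:ℝ) else 0) - (if (p j).2 s = o then (1:ℝ) else 0)) := by
            rw [← Finset.sum_attach t (fun v => (N : ℝ) * (c v * v s o))]
            refine Finset.sum_congr rfl fun j _ => ?_
            rw [hreal _ j.2]
            have : (j : S → O → ℝ) s o = (if (p j).1 s = o then (1:ℝ) else 0)
                - (if (p j).2 s = o then (1:ℝ) else 0) := by
              rw [hp4 j]
              simp [embedAct]
            rw [this]
            ring
          rw [← hxso, hsum1, Finset.mul_sum]
          exact hsum2
        -- convert to Fin-indexed data
        set r : ℕ := t.card with hr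
        set e : {v // v ∈ t} ≃ Fin r := t.equivFin with he
        set avF : Fin r → S → O := fun i => (p (e.symm i)).1 with havF
        set bvF : Fin r → S → O := fun i => (p (e.symm i)).2 with hbvF
        set nF : Fin r → ℕ := fun i => nn (e.symm i : S → O → ℝ) with hnF
        have hcount : ∀ s o, N * (if a s = o then 1 else 0)
            + ∑ i, nF i * (if bvF i s = o then 1 else 0)
            = N * (if b s = o then 1 else 0) + ∑ i, nF i * (if avF i s = o then 1 else 0) := by
          intro s o
          have hR := hcoordR s o
          -- rewrite the subtype sum as a Fin sum
          have hsumav : ∑ j : {v // v ∈ t}, ((nn (j : S → O → ℝ) : ℕ) : ℝ) *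
              ((if (p j).1 s = o then (1:ℝ) else 0) - (if (p j).2 s = o then (1:ℝ) else 0))
              = ∑ i : Fin r, ((nF i : ℕ) : ℝ) *
              ((if avF i s = o then (1:ℝ) else 0) - (if bvF i s = o then (1:ℝ) else 0)) :=
            (Equiv.sum_comp e.symm (fun j => ((nn (j : S → O → ℝ) : ℕ) : ℝ) *
              ((if (p j).1 s = o then (1:ℝ) else 0) - (if (p j).2 s = o then (1:ℝ) else 0)))).symm
          rw [hsumav] at hR
          have hsub : ∑ i : Fin r, ((nF i : ℕ) : ℝ) *
              ((if avF i s = o then (1:ℝ) else 0) - (if bvF i s = o then (1:ℝ) else 0))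
              = (∑ i : Fin r, (nF i : ℝ) * (if avF i s = o then (1:ℝ) else 0))
                - ∑ i : Fin r, (nF i : ℝ) * (if bvF i s = o then (1:ℝ) else 0) := by
            rw [← Finset.sum_sub_distrib]
            exact Finset.sum_congr rfl fun i _ => by ring
          rw [hsub] at hR
          have hR' : (N : ℝ) * (if a s = o then (1:ℝ) else 0)
              + ∑ i : Fin r, (nF i : ℝ) * (if bvF i s = o then (1:ℝ) else 0)
              = (N : ℝ) * (if b s = o then (1:ℝ) else 0)
              + ∑ i : Fin r, (nF i : ℝ) * (if avF i s = o then (1:ℝ) else 0) := by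
            linarith [hR]
          have hcast : ((N * (if a s = o then 1 else 0)
              + ∑ i, nF i * (if bvF i s = o then 1 else 0) : ℕ) : ℝ)
              = ((N * (if b s = o then 1 else 0)
              + ∑ i, nF i * (if avF i s = o then 1 else 0) : ℕ) : ℝ) := by
            push_cast [apply_ite (fun n : ℕ => (n : ℝ))]
            linarith [hR']
          exact Nat.cast_injective hcast
        exact cancel_of_nat_combo C R hcancel a b haC hbC r avF bvF
          (fun i => hp1 _) (fun i => hp2 _) (fun i => hp3 _) nF N hNpos hcount
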